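/- arXiv:1302.0163 — 2 statements merged into one kernel-verified Lean document; each statement's English description precedes it below -/
import Mathlib

section
/- Let $X_1,\dots,X_n$ be distinct real numbers, let $x\in\mathbb R$, set $a=\#\{i: X_i\le x\}$ and $\hat F(x)=a/n$, and assume $0<a<n$ and $0<F_0(x)<1$ for a specified cdf $F_0$. Define $\mathcal R(x)$ as the ratio of $\sup\{\prod_{i=1}^n p_i : p_i\ge 0, \sum_i p_i=1, \sum_{i:X_i\le x}p_i=F_0(x)\}$ to $\sup\{\prod_{i=1}^n p_i : p_i\ge 0, \sum_i p_i = 1, \sum_{i:X_i\le x}p_i\le F_0(x)\}$. Then $\mathcal R(x)=1$ if $\hat F(x)>F_0(x)$, and $\mathcal R(x)=\big[F_0(x)/\hat F(x)\big]^{n\hat F(x)}\big[(1-F_0(x))/(1-\hat F(x))\big]^{n(1-\hat F(x))}$ if $\hat F(x)\le F_0(x)$. -/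
open MeasureTheory Set
open scoped ENNReal

open Finset in
/-- AM-GM: product over a nonempty finset is at most (mean)^card. -/
lemma amgm_prod_le {ι : Type*} (s : Finset ι) (hs : s.Nonempty) (p : ι → ℝ)
    (hp : ∀ i ∈ s, 0 ≤ p i) :
    ∏ i ∈ s, p i ≤ ((∑ i ∈ s, p i) / s.card) ^ s.card := by
  have hc : (0:ℝ) < s.card := by exact_mod_cast hs.card_pos
  have h := Real.geom_mean_le_arith_mean_weighted s (fun _ => (s.card : ℝ)⁻¹) p
    (fun i _ => by positivity) (by simp [Finset.sum_const]; field_simp) hp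
  have hL : (∏ i ∈ s, p i ^ ((s.card : ℝ)⁻¹)) = (∏ i ∈ s, p i) ^ ((s.card : ℝ)⁻¹) :=
    Real.finset_prod_rpow s p hp _
  have hR : (∑ i ∈ s, (s.card : ℝ)⁻¹ * p i) = (∑ i ∈ s, p i) / s.card := by
    rw [← Finset.mul_sum]; ring
  rw [hL, hR] at h
  have hprod : (0:ℝ) ≤ ∏ i ∈ s, p i := Finset.prod_nonneg hp
  have h2 := Real.rpow_le_rpow (Real.rpow_nonneg hprod _) h (le_of_lt hc)
  rw [← Real.rpow_natCast ((∑ i ∈ s, p i) / s.card) s.card]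
  rw [← Real.rpow_mul hprod, inv_mul_cancel₀ (ne_of_gt hc), Real.rpow_one] at h2
  exact h2

/-- monotonicity of `t^(a+1)(1-t)^(b+1)` on `[0, (a+1)/(a+b+2)]`. -/
lemma mono_aux (a b : ℕ) :
    MonotoneOn (fun t : ℝ => t ^ (a+1) * (1-t) ^ (b+1))
      (Set.Icc 0 ((a+1 : ℝ)/(a+b+2))) := by
  have hint : interior (Set.Icc (0:ℝ) ((a+1 : ℝ)/(a+b+2))) =
      Set.Ioo 0 ((a+1 : ℝ)/(a+b+2)) := interior_Icc
  refine (strictMonoOn_of_deriv_pos (convex_Icc _ _) (by fun_prop) ?_).monotoneOn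
  intro t ht
  rw [hint] at ht
  obtain ⟨ht0, ht1⟩ := ht
  have hd : HasDerivAt (fun t : ℝ => t ^ (a+1) * (1-t) ^ (b+1))
      ((a+1 : ℝ) * t ^ a * (1-t) ^ (b+1)
        + t ^ (a+1) * (((b+1 : ℝ) * (1-t) ^ b) * (-1))) t := by
    have h1 : HasDerivAt (fun t : ℝ => t ^ (a+1)) ((a+1 : ℝ) * t ^ a) t := by
      simpa using hasDerivAt_pow (a+1) t
    have h2 : HasDerivAt (fun t : ℝ => (1-t) ^ (b+1)) (((b+1 : ℝ) * (1-t) ^ b) * (-1)) t := by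
      have := (hasDerivAt_pow (b+1) (1-t)).comp t
        ((hasDerivAt_const t (1:ℝ)).sub (hasDerivAt_id t))
      simpa [Function.comp_def] using this
    exact h1.mul h2
  rw [hd.deriv]
  have hlt1 : t < 1 := by
    have : (a+1 : ℝ)/(a+b+2) ≤ 1 := by
      rw [div_le_one (by positivity)]; linarith
    linarith
  have key : (a+1 : ℝ) * t ^ a * (1-t) ^ (b+1)
        + t ^ (a+1) * (((b+1 : ℝ) * (1-t) ^ b) * (-1))
      = t ^ a * (1-t) ^ b * ((a+1 : ℝ) - (a+b+2) * t) := by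
    ring
  rw [key]
  have hpos : (0:ℝ) < (a+1 : ℝ) - (a+b+2) * t := by
    have h := (lt_div_iff₀ (show (0:ℝ) < (a:ℝ)+b+2 by positivity)).mp ht1
    nlinarith
  exact mul_pos (mul_pos (pow_pos ht0 a) (pow_pos (by linarith : (0:ℝ) < 1 - t) b)) hpos

/-- Upper bound for products over the simplex with given mass on `A`. -/
lemma prod_bound (n a : ℕ) (A : Finset (Fin n)) (hA : A.card = a) (ha0 : 0 < a) (han : a < n)
    (p : Fin n → ℝ) (hp : ∀ i, 0 ≤ p i) (hs : ∑ i, p i = 1) :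
    ∏ i, p i ≤ ((∑ i ∈ A, p i)/(a:ℝ))^a * ((1 - ∑ i ∈ A, p i)/((n - a : ℕ):ℝ))^(n-a) := by
  have hA' : A.Nonempty := Finset.card_pos.mp (by omega)
  have hAc_card : Aᶜ.card = n - a := by
    simp [Finset.card_compl, hA]
  have hAc : Aᶜ.Nonempty := Finset.card_pos.mp (by omega)
  have hsplit : ∑ i ∈ Aᶜ, p i = 1 - ∑ i ∈ A, p i := by
    have h := Finset.sum_add_sum_compl A p
    rw [hs] at h; linarith
  calc ∏ i, p i = (∏ i ∈ A, p i) * ∏ i ∈ Aᶜ, p i := (Finset.prod_mul_prod_compl A p).symm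
    _ ≤ ((∑ i ∈ A, p i)/(a:ℝ))^a * ((1 - ∑ i ∈ A, p i)/((n - a : ℕ):ℝ))^(n-a) := by
        have h1 := amgm_prod_le A hA' p (fun i _ => hp i)
        have h2 := amgm_prod_le Aᶜ hAc p (fun i _ => hp i)
        rw [hA] at h1
        rw [hAc_card, hsplit] at h2
        exact mul_le_mul h1 h2 (Finset.prod_nonneg fun i _ => hp i)
          (pow_nonneg (div_nonneg (Finset.sum_nonneg fun i _ => hp i) (Nat.cast_nonneg a)) a)

/-- The AM-GM bound is attained. -/
lemma prod_attain (n a : ℕ) (A : Finset (Fin n)) (hA : A.card = a) (ha0 : 0 < a) (han : a < n)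
    (t : ℝ) :
    ∃ p : Fin n → ℝ, (∀ i, 0 ≤ t → t ≤ 1 → 0 ≤ p i) ∧ (∑ i, p i) = 1 ∧ (∑ i ∈ A, p i) = t ∧
      ∏ i, p i = (t/(a:ℝ))^a * ((1-t)/((n - a : ℕ):ℝ))^(n-a) := by
  classical
  have ha' : ((a:ℝ)) ≠ 0 := Nat.cast_ne_zero.mpr (by omega)
  have hb0 : 0 < n - a := by omega
  have hb' : (((n - a : ℕ)):ℝ) ≠ 0 := by
    simp only [ne_eq, Nat.cast_eq_zero]; omega
  have hAc_card : Aᶜ.card = n - a := by simp [Finset.card_compl, hA]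
  refine ⟨fun i => if i ∈ A then t/(a:ℝ) else (1-t)/((n - a : ℕ):ℝ), ?_, ?_, ?_, ?_⟩
  · intro i ht0 ht1
    by_cases hi : i ∈ A <;> simp [hi]
    · exact div_nonneg ht0 (Nat.cast_nonneg a)
    · exact div_nonneg (by linarith) (Nat.cast_nonneg _)
  · rw [← Finset.sum_add_sum_compl A]
    rw [Finset.sum_congr rfl (fun i hi => if_pos hi),
      Finset.sum_congr rfl (fun i hi => if_neg (Finset.mem_compl.mp hi)),
      Finset.sum_const, Finset.sum_const, hA, hAc_card, nsmul_eq_mul, nsmul_eq_mul]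
    field_simp
    ring
  · rw [Finset.sum_congr rfl (fun i hi => if_pos hi), Finset.sum_const, hA, nsmul_eq_mul]
    field_simp
  · rw [← Finset.prod_mul_prod_compl A]
    rw [Finset.prod_congr rfl (fun i hi => if_pos hi),
      Finset.prod_congr rfl (fun i hi => if_neg (Finset.mem_compl.mp hi)),
      Finset.prod_const, Finset.prod_const, hA, hAc_card]

/-- Monotonicity wrapper. -/
lemma mono_aux' (a n : ℕ) (ha0 : 0 < a) (han : a < n) :
    MonotoneOn (fun t : ℝ => t ^ a * (1-t) ^ (n-a)) (Set.Icc 0 ((a:ℝ)/(n:ℝ))) := by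
  have h := mono_aux (a-1) (n-a-1)
  have e1 : a - 1 + 1 = a := by omega
  have e2 : n - a - 1 + 1 = n - a := by omega
  have c1 : ((a - 1 : ℕ):ℝ) = (a:ℝ) - 1 := by
    rw [Nat.cast_sub (by omega)]; norm_num
  have c2 : ((n - a - 1 : ℕ):ℝ) = (n:ℝ) - a - 1 := by
    rw [Nat.cast_sub (by omega), Nat.cast_sub (by omega)]; norm_num
  rw [e1, e2] at h
  have e4 : ((a - 1 : ℕ):ℝ) + 1 = (a:ℝ) := by rw [c1]; ring
  have e5 : ((a - 1 : ℕ):ℝ) + ((n - a - 1 : ℕ):ℝ) + 2 = (n:ℝ) := by rw [c1, c2]; ring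
  rw [e4, e5] at h
  exact h

/-- **Explicit form of the local empirical likelihood ratio.** Let `X_1, …, X_n` be distinct
reals, `x ∈ ℝ`, `a = #{i : X_i ≤ x}` with `0 < a < n`, and let `F0` be the cdf of a
probability measure `μ` with `0 < F0(x) < 1`. With `𝓡(x)` the ratio of
`sup{∏ p_i : p ≥ 0, ∑ p_i = 1, ∑_{X_i ≤ x} p_i = F0(x)}` to
`sup{∏ p_i : p ≥ 0, ∑ p_i = 1, ∑_{X_i ≤ x} p_i ≤ F0(x)}`, one has `𝓡(x) = 1` if
`F̂(x) > F0(x)` and `𝓡(x) = (F0(x)/F̂(x))^(n F̂(x)) ((1-F0(x))/(1-F̂(x)))^(n(1-F̂(x)))`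
if `F̂(x) ≤ F0(x)`, where `F̂(x) = a/n` (real powers via `Real.rpow`). -/
theorem el_ratio_explicit_form
    (n : ℕ) (X : Fin n → ℝ) (hX : Function.Injective X) (x : ℝ)
    (μ : Measure ℝ) [IsProbabilityMeasure μ]
    (F0 : ℝ → ℝ) (hF0 : ∀ y, F0 y = (μ (Iic y)).toReal)
    (a : ℕ) (ha : a = (Finset.univ.filter fun i => X i ≤ x).card)
    (ha0 : 0 < a) (han : a < n)
    (hx0 : 0 < F0 x) (hx1 : F0 x < 1)
    (Fhat : ℝ) (hFhat : Fhat = (a : ℝ) / n)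
    (num den R : ℝ)
    (hnum : num = sSup {v : ℝ | ∃ p : Fin n → ℝ, (∀ i, 0 ≤ p i) ∧ (∑ i, p i) = 1 ∧
      (∑ i ∈ Finset.univ.filter fun i => X i ≤ x, p i) = F0 x ∧ v = ∏ i, p i})
    (hden : den = sSup {v : ℝ | ∃ p : Fin n → ℝ, (∀ i, 0 ≤ p i) ∧ (∑ i, p i) = 1 ∧
      (∑ i ∈ Finset.univ.filter fun i => X i ≤ x, p i) ≤ F0 x ∧ v = ∏ i, p i})
    (hR : R = num / den) :
    (Fhat > F0 x → R = 1) ∧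
    (Fhat ≤ F0 x →
      R = (F0 x / Fhat) ^ ((n : ℝ) * Fhat) *
        ((1 - F0 x) / (1 - Fhat)) ^ ((n : ℝ) * (1 - Fhat))) := by
  classical
  set A : Finset (Fin n) := Finset.univ.filter (fun i => X i ≤ x) with hAdef
  have hA : A.card = a := ha.symm
  set t0 := F0 x with ht0def
  have hn0 : 0 < n := by omega
  have hnR : (0:ℝ) < n := Nat.cast_pos.mpr hn0
  have haR : (0:ℝ) < a := Nat.cast_pos.mpr ha0
  have hbR : (0:ℝ) < ((n - a : ℕ):ℝ) := Nat.cast_pos.mpr (by omega)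
  have hcnab : ((n - a : ℕ):ℝ) = (n:ℝ) - a := by rw [Nat.cast_sub han.le]
  -- the candidate optimal value for the equality-constrained problem
  set G : ℝ → ℝ := fun t => (t/(a:ℝ))^a * ((1-t)/((n - a : ℕ):ℝ))^(n-a) with hGdef
  have hGpos : 0 < G t0 :=
    mul_pos (pow_pos (div_pos hx0 haR) a) (pow_pos (div_pos (by linarith) hbR) (n-a))
  -- value of the numerator
  have hnum_great : IsGreatest {v : ℝ | ∃ p : Fin n → ℝ, (∀ i, 0 ≤ p i) ∧ (∑ i, p i) = 1 ∧
      (∑ i ∈ A, p i) = t0 ∧ v = ∏ i, p i} (G t0) := by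
    constructor
    · obtain ⟨p, hp0, hp1, hp2, hp3⟩ := prod_attain n a A hA ha0 han t0
      exact ⟨p, fun i => hp0 i hx0.le hx1.le, hp1, hp2, hp3.symm⟩
    · rintro v ⟨p, hp0, hp1, hp2, rfl⟩
      have h := prod_bound n a A hA ha0 han p hp0 hp1
      rw [hp2] at h
      exact h
  have hnumv : num = G t0 := by rw [hnum]; exact hnum_great.csSup_eq
  constructor
  · -- case Fhat > F0 x
    intro h
    have ht0lt : t0 < (a:ℝ)/n := by rw [hFhat] at h; linarith
    have hden_great : IsGreatest {v : ℝ | ∃ p : Fin n → ℝ, (∀ i, 0 ≤ p i) ∧ (∑ i, p i) = 1 ∧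
        (∑ i ∈ A, p i) ≤ t0 ∧ v = ∏ i, p i} (G t0) := by
      constructor
      · obtain ⟨p, hp0, hp1, hp2, hp3⟩ := prod_attain n a A hA ha0 han t0
        exact ⟨p, fun i => hp0 i hx0.le hx1.le, hp1, le_of_eq hp2, hp3.symm⟩
      · rintro v ⟨p, hp0, hp1, hp2, rfl⟩
        have h1 := prod_bound n a A hA ha0 han p hp0 hp1
        have hs0 : 0 ≤ ∑ i ∈ A, p i := Finset.sum_nonneg fun i _ => hp0 i
        have hmem1 : (∑ i ∈ A, p i) ∈ Set.Icc (0:ℝ) ((a:ℝ)/n) :=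
          ⟨hs0, le_trans hp2 ht0lt.le⟩
        have hmem2 : t0 ∈ Set.Icc (0:ℝ) ((a:ℝ)/n) := ⟨hx0.le, ht0lt.le⟩
        have hmono := mono_aux' a n ha0 han hmem1 hmem2 hp2
        have hGform : ∀ t : ℝ, G t =
            (t^a * (1-t)^(n-a)) * (((a:ℝ))^a * (((n - a : ℕ)):ℝ)^(n-a))⁻¹ := by
          intro t
          rw [hGdef]
          simp only []
          rw [div_pow, div_pow]
          field_simp
        calc ∏ i, p i ≤ G (∑ i ∈ A, p i) := h1
          _ ≤ G t0 := by
              rw [hGform, hGform]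
              exact mul_le_mul_of_nonneg_right hmono (by positivity)
    have hdenv : den = G t0 := by rw [hden]; exact hden_great.csSup_eq
    rw [hR, hnumv, hdenv, div_self (ne_of_gt hGpos)]
  · -- case Fhat ≤ F0 x
    intro h
    have hFh : Fhat = (a:ℝ)/n := hFhat
    have hden_great : IsGreatest {v : ℝ | ∃ p : Fin n → ℝ, (∀ i, 0 ≤ p i) ∧ (∑ i, p i) = 1 ∧
        (∑ i ∈ A, p i) ≤ t0 ∧ v = ∏ i, p i} (((n:ℝ)⁻¹)^n) := by
      constructor
      · refine ⟨fun _ => (n:ℝ)⁻¹, fun i => by positivity, ?_, ?_, ?_⟩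
        · rw [Finset.sum_const, Finset.card_univ, Fintype.card_fin, nsmul_eq_mul]
          field_simp
        · rw [Finset.sum_const, hA, nsmul_eq_mul]
          have : (a:ℝ) * (n:ℝ)⁻¹ = Fhat := by rw [hFh]; ring
          rw [this]; exact h
        · rw [Finset.prod_const, Finset.card_univ, Fintype.card_fin]
      · rintro v ⟨p, hp0, hp1, _, rfl⟩
        have huniv : (Finset.univ : Finset (Fin n)).Nonempty :=
          ⟨⟨0, hn0⟩, Finset.mem_univ _⟩
        have h1 := amgm_prod_le Finset.univ huniv p (fun i _ => hp0 i)
        rw [hp1, Finset.card_univ, Fintype.card_fin, one_div] at h1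
        exact h1
    have hdenv : den = ((n:ℝ)⁻¹)^n := by rw [hden]; exact hden_great.csSup_eq
    have e1 : (n:ℝ) * Fhat = ((a:ℕ):ℝ) := by rw [hFh]; field_simp
    have e2 : (n:ℝ) * (1 - Fhat) = ((n - a : ℕ):ℝ) := by rw [hFh, hcnab]; field_simp
    rw [e1, e2, Real.rpow_natCast, Real.rpow_natCast]
    have h1mF : 1 - Fhat = ((n - a : ℕ):ℝ)/n := by rw [hFh, hcnab]; field_simp
    have hsplitpow : ((n:ℝ)⁻¹)^n = ((n:ℝ)⁻¹)^a * ((n:ℝ)⁻¹)^(n-a) := by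
      rw [← pow_add]; congr 1; omega
    have eA : t0/Fhat = (t0/(a:ℝ))/(n:ℝ)⁻¹ := by rw [hFh]; field_simp
    have eB : (1-t0)/(1-Fhat) = ((1-t0)/((n - a : ℕ):ℝ))/(n:ℝ)⁻¹ := by
      rw [h1mF]; field_simp
    rw [hR, hnumv, hdenv, hsplitpow, eA, eB]
    simp only [hGdef, div_pow]
    field_simp
end

section
/- Let $k\ge 2$, let $n_1,\dots,n_k$ be positive integers, and let $a_1,\dots,a_k$ be integers with $0<a_j<n_j$ for all $j$; set $\hat p_j = a_j/n_j$. Let $\mathcal I=\{z\in\mathbb R^k: z_1\le z_2\le\cdots\le z_k\}$ and let $z^*$ be the unique minimizer over $z\in\mathcal I$ of $\sum_{j=1}^k n_j(\hat p_j - z_j)^2$. Then $z^*\in(0,1)^k$, and $z^*$ maximizes the ordered binomial log-likelihood $\ell(z)=\sum_{j=1}^k\big[a_j\log z_j + (n_j-a_j)\log(1-z_j)\big]$ over $\{z\in(0,1)^k: z_1\le\cdots\le z_k\}$. -/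
open Set

private lemma bioassay_concave (A N zj zs : ℝ) (hA : 0 < A) (hAN : A < N)
    (hz0 : 0 < zj) (hz1 : zj < 1) (hs0 : 0 < zs) (hs1 : zs < 1) :
    A * Real.log zj + (N - A) * Real.log (1 - zj) ≤
      A * Real.log zs + (N - A) * Real.log (1 - zs) +
        N * (A / N - zs) * ((zj - zs) / (zs * (1 - zs))) := by
  have h1 : Real.log zj - Real.log zs ≤ zj / zs - 1 := by
    rw [← Real.log_div hz0.ne' hs0.ne']
    exact Real.log_le_sub_one_of_pos (div_pos hz0 hs0)
  have h2 : Real.log (1 - zj) - Real.log (1 - zs) ≤ (1 - zj) / (1 - zs) - 1 := by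
    rw [← Real.log_div (by linarith) (by linarith : (0:ℝ) < 1 - zs).ne']
    exact Real.log_le_sub_one_of_pos (div_pos (by linarith) (by linarith))
  have e : A * (zj / zs - 1) + (N - A) * ((1 - zj) / (1 - zs) - 1) =
      N * (A / N - zs) * ((zj - zs) / (zs * (1 - zs))) := by
    have hN : (0:ℝ) < N := hA.trans hAN
    have h0 : zs ≠ 0 := hs0.ne'
    have h1' : (1:ℝ) - zs ≠ 0 := by linarith
    have hNne : N ≠ 0 := hN.ne'
    field_simp
    ring
  have h3 := mul_le_mul_of_nonneg_left h1 hA.le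
  have h4 := mul_le_mul_of_nonneg_left h2 (by linarith : (0:ℝ) ≤ N - A)
  nlinarith [h3, h4, e]

private lemma bioassay_foc {k : ℕ} (nn : Fin k → ℕ) (p zstar : Fin k → ℝ)
    (hzmin : ∀ z : Fin k → ℝ, Monotone z →
      ∑ j, (nn j : ℝ) * (p j - zstar j) ^ 2 ≤ ∑ j, (nn j : ℝ) * (p j - z j) ^ 2)
    (hzmono : Monotone zstar)
    (u : Fin k → ℝ) (t : ℝ) (ht : 0 < t)
    (hmon : Monotone (fun j => zstar j + t * u j)) :
    ∑ j, (nn j : ℝ) * (p j - zstar j) * u j ≤ 0 := by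
  set S := ∑ j, (nn j : ℝ) * (p j - zstar j) * u j with hSdef
  set Q := ∑ j, (nn j : ℝ) * (u j) ^ 2 with hQdef
  have hQ : 0 ≤ Q := Finset.sum_nonneg fun j _ => by positivity
  have key : ∀ s : ℝ, 0 < s → s ≤ t → 2 * s * S ≤ s ^ 2 * Q := by
    intro s hs hst
    have hmons : Monotone (fun j => zstar j + s * u j) := by
      intro i j hij
      have h1 := hzmono hij
      have h2 := hmon hij
      simp only at h2 ⊢
      nlinarith
    have h3 := hzmin _ hmons
    have expand : ∑ j, (nn j : ℝ) * (p j - (zstar j + s * u j)) ^ 2 =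
        ∑ j, (nn j : ℝ) * (p j - zstar j) ^ 2 - 2 * s * S + s ^ 2 * Q := by
      rw [hSdef, hQdef, Finset.mul_sum, Finset.mul_sum, ← Finset.sum_sub_distrib,
        ← Finset.sum_add_distrib]
      exact Finset.sum_congr rfl fun j _ => by ring
    rw [expand] at h3
    linarith
  by_contra h
  push_neg at h
  set s := min t (S / (Q + 1)) with hsdef
  have hs : 0 < s := lt_min ht (div_pos h (by linarith))
  have h2 := key s hs (min_le_left _ _)
  have hsle : s * (Q + 1) ≤ S := (le_div_iff₀ (by linarith)).mp (min_le_right _ _)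
  nlinarith [mul_pos hs h, mul_pos hs hs, mul_le_mul_of_nonneg_left hsle hs.le]

/-- **The bioassay problem.** Let `0 < a_j < n_j` for `j = 1, …, k`, and set
`p̂_j = a_j / n_j`. If `z*` is the (unique) minimizer over the isotonic cone
`𝓘 = {z : z_1 ≤ ⋯ ≤ z_k}` of the weighted sum of squares `∑_j n_j (p̂_j - z_j)²`,
then `z* ∈ (0,1)^k` and `z*` maximizes the ordered binomial log-likelihood
`ℓ(z) = ∑_j [a_j log z_j + (n_j - a_j) log(1 - z_j)]` over `{z ∈ (0,1)^k : z_1 ≤ ⋯ ≤ z_k}`. -/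
theorem bioassay_isotonic_mle
    (k : ℕ) (hk : 2 ≤ k) (nn a : Fin k → ℕ)
    (ha0 : ∀ j, 0 < a j) (han : ∀ j, a j < nn j)
    (zstar : Fin k → ℝ) (hzmono : Monotone zstar)
    (hzmin : ∀ z : Fin k → ℝ, Monotone z →
      ∑ j, (nn j : ℝ) * ((a j : ℝ) / (nn j : ℝ) - zstar j) ^ 2 ≤
        ∑ j, (nn j : ℝ) * ((a j : ℝ) / (nn j : ℝ) - z j) ^ 2) :
    (∀ j, zstar j ∈ Ioo (0 : ℝ) 1) ∧
    ∀ z : Fin k → ℝ, (∀ j, z j ∈ Ioo (0 : ℝ) 1) → Monotone z →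
      ∑ j, ((a j : ℝ) * Real.log (z j) + ((nn j : ℝ) - (a j : ℝ)) * Real.log (1 - z j)) ≤
        ∑ j, ((a j : ℝ) * Real.log (zstar j) +
          ((nn j : ℝ) - (a j : ℝ)) * Real.log (1 - zstar j)) := by
  have hkpos : 0 < k := by omega
  haveI : NeZero k := ⟨by omega⟩
  have hne : (Finset.univ : Finset (Fin k)).Nonempty := Finset.univ_nonempty
  set p : Fin k → ℝ := fun j => (a j : ℝ) / (nn j : ℝ) with hpdef
  have hnpos : ∀ j, (0:ℝ) < nn j := fun j => by
    exact_mod_cast (ha0 j).trans (han j)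
  have hanR : ∀ j, (a j : ℝ) < nn j := fun j => by exact_mod_cast han j
  have ha0R : ∀ j, (0:ℝ) < a j := fun j => by exact_mod_cast ha0 j
  have hp0 : ∀ j, 0 < p j := fun j => div_pos (ha0R j) (hnpos j)
  have hp1 : ∀ j, p j < 1 := fun j => (div_lt_one (hnpos j)).2 (hanR j)
  set m := Finset.univ.inf' hne p with hmdef
  set M := Finset.univ.sup' hne p with hMdef
  have hm0 : 0 < m := (Finset.lt_inf'_iff hne).2 fun j _ => hp0 j
  have hM1 : M < 1 := (Finset.sup'_lt_iff hne).2 fun j _ => hp1 j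
  have hmp : ∀ j, m ≤ p j := fun j => Finset.inf'_le _ (Finset.mem_univ j)
  have hpM : ∀ j, p j ≤ M := fun j => Finset.le_sup' _ (Finset.mem_univ j)
  have hmM : m ≤ M := (hmp ⟨0, hkpos⟩).trans (hpM ⟨0, hkpos⟩)
  set w : Fin k → ℝ := fun j => max m (min (zstar j) M) with hwdef
  have hwmono : Monotone w := fun i j hij =>
    max_le_max le_rfl (min_le_min (hzmono hij) le_rfl)
  have hwle : ∀ j, (nn j : ℝ) * (p j - w j) ^ 2 ≤ (nn j : ℝ) * (p j - zstar j) ^ 2 := by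
    intro j
    rcases lt_or_ge (zstar j) m with h | h
    · have hw : w j = m := by
        simp only [hwdef]
        rw [min_eq_left (h.le.trans hmM), max_eq_left h.le]
      rw [hw]
      have h1 := hmp j
      have h2 := hnpos j
      have hx : 0 ≤ p j - m := by linarith
      have hy : 0 < m - zstar j := by linarith
      have hsq : (p j - m) ^ 2 ≤ (p j - zstar j) ^ 2 := by
        nlinarith [mul_nonneg hx hy.le, mul_pos hy hy]
      exact mul_le_mul_of_nonneg_left hsq h2.le
    · rcases lt_or_ge M (zstar j) with h2 | h2
      · have hw : w j = M := by
          simp only [hwdef]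
          rw [min_eq_right h2.le, max_eq_right hmM]
        rw [hw]
        have h1 := hpM j
        have h3 := hnpos j
        have hx : 0 ≤ M - p j := by linarith
        have hy : 0 < zstar j - M := by linarith
        have hsq : (p j - M) ^ 2 ≤ (p j - zstar j) ^ 2 := by
          nlinarith [mul_nonneg hx hy.le, mul_pos hy hy]
        exact mul_le_mul_of_nonneg_left hsq h3.le
      · have hw : w j = zstar j := by
          simp only [hwdef]
          rw [min_eq_left h2, max_eq_right h]
        rw [hw]
  have hbound : ∀ j, m ≤ zstar j ∧ zstar j ≤ M := by
    intro j0
    by_contra hcon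
    have hstrict : (nn j0 : ℝ) * (p j0 - w j0) ^ 2 < (nn j0 : ℝ) * (p j0 - zstar j0) ^ 2 := by
      rcases not_and_or.mp hcon with h | h
      · push_neg at h
        have hw : w j0 = m := by
          simp only [hwdef]
          rw [min_eq_left (h.le.trans hmM), max_eq_left h.le]
        rw [hw]
        have h1 := hmp j0
        have h2 := hnpos j0
        have hx : 0 ≤ p j0 - m := by linarith
        have hy : 0 < m - zstar j0 := by linarith
        have hsq : (p j0 - m) ^ 2 < (p j0 - zstar j0) ^ 2 := by
          nlinarith [mul_nonneg hx hy.le, mul_pos hy hy]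
        exact mul_lt_mul_of_pos_left hsq h2
      · push_neg at h
        have hw : w j0 = M := by
          simp only [hwdef]
          rw [min_eq_right h.le, max_eq_right hmM]
        rw [hw]
        have h1 := hpM j0
        have h2 := hnpos j0
        have hx : 0 ≤ M - p j0 := by linarith
        have hy : 0 < zstar j0 - M := by linarith
        have hsq : (p j0 - M) ^ 2 < (p j0 - zstar j0) ^ 2 := by
          nlinarith [mul_nonneg hx hy.le, mul_pos hy hy]
        exact mul_lt_mul_of_pos_left hsq h2
    have hlt := Finset.sum_lt_sum (fun j (_ : j ∈ Finset.univ) => hwle j)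
      ⟨j0, Finset.mem_univ j0, hstrict⟩
    have hge := hzmin w hwmono
    linarith
  have hIoo : ∀ j, zstar j ∈ Ioo (0:ℝ) 1 := fun j =>
    ⟨lt_of_lt_of_le hm0 (hbound j).1, lt_of_le_of_lt (hbound j).2 hM1⟩
  refine ⟨hIoo, ?_⟩
  intro z hz hzm
  set d : Fin k → ℝ := fun j => (z j - zstar j) / (zstar j * (1 - zstar j)) with hddef
  have hden : ∀ j, 0 < zstar j * (1 - zstar j) := fun j =>
    mul_pos (hIoo j).1 (by linarith [(hIoo j).2])
  have hdmono_eq : ∀ i j : Fin k, i ≤ j → zstar i = zstar j → d i ≤ d j := by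
    intro i j hij he
    simp only [hddef]
    rw [he]
    exact (div_le_div_iff_of_pos_right (hden j)).2 (by linarith [hzm hij])
  set B := 1 + ∑ j, |d j| with hBdef
  have hBd : ∀ j, |d j| ≤ B := by
    intro j
    have h1 : |d j| ≤ ∑ i, |d i| :=
      Finset.single_le_sum (fun i _ => abs_nonneg (d i)) (Finset.mem_univ j)
    have h2 : (0:ℝ) ≤ ∑ i, |d i| := Finset.sum_nonneg fun i _ => abs_nonneg _
    simp only [hBdef]
    linarith
  have hBpos : 0 < B := by
    have h2 : (0:ℝ) ≤ ∑ i, |d i| := Finset.sum_nonneg fun i _ => abs_nonneg _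
    simp only [hBdef]; linarith
  have hT : ∃ t : ℝ, 0 < t ∧ ∀ i j : Fin k, zstar i < zstar j →
      t * (2 * B) ≤ zstar j - zstar i := by
    by_cases hSP : (Finset.univ.filter
        (fun q : Fin k × Fin k => zstar q.1 < zstar q.2)).Nonempty
    · set δ := (Finset.univ.filter
        (fun q : Fin k × Fin k => zstar q.1 < zstar q.2)).inf' hSP
          (fun q => zstar q.2 - zstar q.1) with hδdef
      have hδ : 0 < δ := (Finset.lt_inf'_iff hSP).2 fun q hq =>
        sub_pos.2 (Finset.mem_filter.mp hq).2
      refine ⟨δ / (2 * B), div_pos hδ (by linarith), ?_⟩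
      intro i j h
      have hmem : (i, j) ∈ Finset.univ.filter
          (fun q : Fin k × Fin k => zstar q.1 < zstar q.2) :=
        Finset.mem_filter.2 ⟨Finset.mem_univ _, h⟩
      have hle : δ ≤ zstar j - zstar i := Finset.inf'_le _ hmem
      rw [div_mul_cancel₀ _ (by linarith : (2:ℝ) * B ≠ 0)]
      exact hle
    · refine ⟨1, one_pos, fun i j h => absurd ?_ hSP⟩
      exact ⟨(i, j), Finset.mem_filter.2 ⟨Finset.mem_univ _, h⟩⟩
  obtain ⟨t, ht, htgap⟩ := hT
  have hmon : Monotone (fun j => zstar j + t * d j) := by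
    intro i j hij
    simp only
    rcases eq_or_lt_of_le (hzmono hij) with he | hlt
    · have hd := hdmono_eq i j hij he
      have := mul_le_mul_of_nonneg_left hd ht.le
      linarith
    · have hgap := htgap i j hlt
      have h1 := abs_le.mp (hBd i)
      have h2 := abs_le.mp (hBd j)
      have h3 : d i - d j ≤ 2 * B := by linarith
      have h4 : t * (d i - d j) ≤ t * (2 * B) := mul_le_mul_of_nonneg_left h3 ht.le
      linarith
  have hS := bioassay_foc nn p zstar hzmin hzmono d t ht hmon
  have hper : ∀ j, (a j : ℝ) * Real.log (z j) + ((nn j : ℝ) - (a j : ℝ)) * Real.log (1 - z j) ≤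
      ((a j : ℝ) * Real.log (zstar j) + ((nn j : ℝ) - (a j : ℝ)) * Real.log (1 - zstar j)) +
        (nn j : ℝ) * (p j - zstar j) * d j := by
    intro j
    have hc := bioassay_concave (a j) (nn j) (z j) (zstar j) (ha0R j) (hanR j)
      (hz j).1 (hz j).2 (hIoo j).1 (hIoo j).2
    simp only [hpdef, hddef]
    exact hc
  calc ∑ j, ((a j : ℝ) * Real.log (z j) + ((nn j : ℝ) - (a j : ℝ)) * Real.log (1 - z j))
      ≤ ∑ j, (((a j : ℝ) * Real.log (zstar j) +
          ((nn j : ℝ) - (a j : ℝ)) * Real.log (1 - zstar j)) +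
            (nn j : ℝ) * (p j - zstar j) * d j) :=
        Finset.sum_le_sum fun j _ => hper j
    _ = (∑ j, ((a j : ℝ) * Real.log (zstar j) +
          ((nn j : ℝ) - (a j : ℝ)) * Real.log (1 - zstar j))) +
            ∑ j, (nn j : ℝ) * (p j - zstar j) * d j := Finset.sum_add_distrib
    _ ≤ ∑ j, ((a j : ℝ) * Real.log (zstar j) +
          ((nn j : ℝ) - (a j : ℝ)) * Real.log (1 - zstar j)) := by linarith
end
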